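/- Let Y be a Banach lattice, X = Y*, and K : Y → Y an AM-compact operator. Then for every ξ ∈ Y with ξ ≥ 0, the adjoint K* is continuous as a map from the closed unit ball of X with the weak* topology to X equipped with the seminorm ρ_ξ(x) = |x|(ξ). -/

import Mathlib

open Set NormedSpace Pointwise

/-- An operator on a Banach lattice is AM-compact if it maps every order interval
to a relatively norm-compact set. -/
def IsAMCompact {Y : Type*} [NormedAddCommGroup Y] [Lattice Y] [HasSolidNorm Y]
    [IsOrderedAddMonoid Y] [NormedSpace ℝ Y]
    (K : Y →L[ℝ] Y) : Prop :=
  ∀ ξ : Y, 0 ≤ ξ → IsCompact (closure (K '' Set.Icc (-ξ) ξ))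

/-- The adjoint of an operator `K : Y →L[ℝ] Y`, acting on `X = Y*` by `f ↦ f ∘ K`. -/
noncomputable def adjointOp {Y : Type*} [NormedAddCommGroup Y] [NormedSpace ℝ Y]
    (K : Y →L[ℝ] Y) : StrongDual ℝ Y →L[ℝ] StrongDual ℝ Y :=
  (ContinuousLinearMap.compL ℝ Y Y ℝ).flip K

section Aux

variable {Y : Type*} [NormedAddCommGroup Y] [Lattice Y] [HasSolidNorm Y]
    [IsOrderedAddMonoid Y] [NormedSpace ℝ Y]

/-- Auxiliary: `sSup (g '' [-ξ, ξ])`, the Riesz–Kantorovich candidate for `|g| ξ`. -/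
noncomputable def rkFun (g : StrongDual ℝ Y) (ξ : Y) : ℝ :=
  sSup (g '' Set.Icc (-ξ) ξ)

lemma norm_le_of_mem_Icc {ξ η : Y} (hξ : 0 ≤ ξ) (hη : η ∈ Set.Icc (-ξ) ξ) : ‖η‖ ≤ ‖ξ‖ := by
  refine HasSolidNorm.solid ?_
  rw [abs_of_nonneg hξ]
  exact abs_le'.2 ⟨hη.2, neg_le.mpr hη.1⟩

lemma rk_bddAbove (g : StrongDual ℝ Y) {ξ : Y} (hξ : 0 ≤ ξ) :
    BddAbove (g '' Set.Icc (-ξ) ξ) := by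
  refine ⟨‖g‖ * ‖ξ‖, ?_⟩
  rintro _ ⟨η, hη, rfl⟩
  calc g η ≤ |g η| := le_abs_self _
    _ = ‖g η‖ := (Real.norm_eq_abs _).symm
    _ ≤ ‖g‖ * ‖η‖ := g.le_opNorm η
    _ ≤ ‖g‖ * ‖ξ‖ := mul_le_mul_of_nonneg_left (norm_le_of_mem_Icc hξ hη) (norm_nonneg g)

lemma zero_mem_Icc' {ξ : Y} (hξ : 0 ≤ ξ) : (0 : Y) ∈ Set.Icc (-ξ) ξ :=
  ⟨neg_nonpos_of_nonneg hξ, hξ⟩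

lemma rk_nonempty (g : StrongDual ℝ Y) {ξ : Y} (hξ : 0 ≤ ξ) :
    (g '' Set.Icc (-ξ) ξ).Nonempty :=
  ⟨g 0, Set.mem_image_of_mem g (zero_mem_Icc' hξ)⟩

lemma le_rkFun (g : StrongDual ℝ Y) {ξ η : Y} (hξ : 0 ≤ ξ) (hη : η ∈ Set.Icc (-ξ) ξ) :
    g η ≤ rkFun g ξ :=
  le_csSup (rk_bddAbove g hξ) (Set.mem_image_of_mem g hη)

lemma rkFun_nonneg (g : StrongDual ℝ Y) {ξ : Y} (hξ : 0 ≤ ξ) : 0 ≤ rkFun g ξ := by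
  have := le_rkFun g hξ (zero_mem_Icc' hξ)
  simpa using this

lemma rkFun_le (g : StrongDual ℝ Y) {ξ : Y} (hξ : 0 ≤ ξ) : rkFun g ξ ≤ ‖g‖ * ‖ξ‖ := by
  refine csSup_le (rk_nonempty g hξ) ?_
  rintro _ ⟨η, hη, rfl⟩
  calc g η ≤ |g η| := le_abs_self _
    _ = ‖g η‖ := (Real.norm_eq_abs _).symm
    _ ≤ ‖g‖ * ‖η‖ := g.le_opNorm η
    _ ≤ ‖g‖ * ‖ξ‖ := mul_le_mul_of_nonneg_left (norm_le_of_mem_Icc hξ hη) (norm_nonneg g)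

/-- Riesz decomposition in a lattice-ordered group. -/
lemma riesz_decomp {a b c : Y} (ha : 0 ≤ a) (hb : 0 ≤ b) (hc0 : 0 ≤ c) (hc : c ≤ a + b) :
    ∃ c₁ c₂, 0 ≤ c₁ ∧ c₁ ≤ a ∧ 0 ≤ c₂ ∧ c₂ ≤ b ∧ c = c₁ + c₂ := by
  refine ⟨c ⊓ a, c - c ⊓ a, le_inf hc0 ha, inf_le_right, ?_, ?_, by abel⟩
  · exact sub_nonneg.mpr inf_le_left
  · have key : c - c ⊓ a = (c - a)⁺ := by
      rw [inf_eq_sub_posPart_sub c a]; abel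
    rw [key, posPart_def]
    exact sup_le (sub_le_iff_le_add'.mpr hc) hb

lemma Icc_add_Icc_order {a b : Y} (ha : 0 ≤ a) (hb : 0 ≤ b) :
    Set.Icc (-(a + b)) (a + b) = Set.Icc (-a) a + Set.Icc (-b) b := by
  ext ζ
  constructor
  · rintro ⟨h1, h2⟩
    have hpos : ζ⁺ ≤ a + b := by
      rw [posPart_def]; exact sup_le h2 (add_nonneg ha hb)
    have hneg : ζ⁻ ≤ a + b := by
      rw [negPart_def]; exact sup_le (neg_le.mpr h1) (add_nonneg ha hb)
    obtain ⟨p₁, p₂, hp₁0, hp₁a, hp₂0, hp₂b, hp⟩ :=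
      riesz_decomp ha hb (posPart_nonneg ζ) hpos
    obtain ⟨q₁, q₂, hq₁0, hq₁a, hq₂0, hq₂b, hq⟩ :=
      riesz_decomp ha hb (negPart_nonneg ζ) hneg
    refine Set.mem_add.mpr ⟨p₁ - q₁, ⟨?_, ?_⟩, p₂ - q₂, ⟨?_, ?_⟩, ?_⟩
    · have : (0 : Y) - a ≤ p₁ - q₁ := sub_le_sub hp₁0 hq₁a
      simpa using this
    · have : p₁ - q₁ ≤ a - 0 := sub_le_sub hp₁a hq₁0
      simpa using this
    · have : (0 : Y) - b ≤ p₂ - q₂ := sub_le_sub hp₂0 hq₂b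
      simpa using this
    · have : p₂ - q₂ ≤ b - 0 := sub_le_sub hp₂b hq₂0
      simpa using this
    · have hz := posPart_sub_negPart ζ
      rw [hp, hq] at hz
      rw [← hz]; abel
  · rintro ⟨u, hu, v, hv, rfl⟩
    exact ⟨by rw [neg_add]; exact add_le_add hu.1 hv.1, add_le_add hu.2 hv.2⟩

lemma image_add_set (g : StrongDual ℝ Y) (A B : Set Y) : g '' (A + B) = g '' A + g '' B := by
  ext z
  constructor
  · rintro ⟨_, ⟨u, hu, v, hv, rfl⟩, rfl⟩
    exact Set.mem_add.mpr ⟨g u, Set.mem_image_of_mem g hu, g v, Set.mem_image_of_mem g hv,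
      (map_add g u v).symm⟩
  · rintro ⟨_, ⟨u, hu, rfl⟩, _, ⟨v, hv, rfl⟩, rfl⟩
    exact ⟨u + v, Set.add_mem_add hu hv, map_add g u v⟩

lemma rkFun_add (g : StrongDual ℝ Y) {a b : Y} (ha : 0 ≤ a) (hb : 0 ≤ b) :
    rkFun g (a + b) = rkFun g a + rkFun g b := by
  unfold rkFun
  rw [Icc_add_Icc_order ha hb, image_add_set]
  exact csSup_add (rk_nonempty g ha) (rk_bddAbove g ha) (rk_nonempty g hb) (rk_bddAbove g hb)

lemma rkFun_zero (g : StrongDual ℝ Y) : rkFun g 0 = 0 := by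
  unfold rkFun
  rw [neg_zero, Set.Icc_self, Set.image_singleton, map_zero, csSup_singleton]

/-- The Riesz–Kantorovich linear extension of `rkFun g` as a function. -/
noncomputable def rkExt (g : StrongDual ℝ Y) : Y → ℝ := fun y => rkFun g y⁺ - rkFun g y⁻

lemma rkExt_add (g : StrongDual ℝ Y) (y z : Y) : rkExt g (y + z) = rkExt g y + rkExt g z := by
  have h : (y + z)⁺ - (y + z)⁻ = (y⁺ + z⁺) - (y⁻ + z⁻) := by
    rw [posPart_sub_negPart,
      show (y⁺ + z⁺) - (y⁻ + z⁻) = (y⁺ - y⁻) + (z⁺ - z⁻) by abel,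
      posPart_sub_negPart, posPart_sub_negPart]
  have key : (y + z)⁺ + (y⁻ + z⁻) = (y⁺ + z⁺) + (y + z)⁻ := sub_eq_sub_iff_add_eq_add.mp h
  have hr : rkFun g ((y + z)⁺ + (y⁻ + z⁻)) = rkFun g ((y⁺ + z⁺) + (y + z)⁻) := by rw [key]
  rw [rkFun_add g (posPart_nonneg _) (add_nonneg (negPart_nonneg _) (negPart_nonneg _)),
    rkFun_add g (negPart_nonneg _) (negPart_nonneg _),
    rkFun_add g (add_nonneg (posPart_nonneg _) (posPart_nonneg _)) (negPart_nonneg _),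
    rkFun_add g (posPart_nonneg _) (posPart_nonneg _)] at hr
  unfold rkExt
  linarith

lemma norm_posPart_le' (y : Y) : ‖y⁺‖ ≤ ‖y‖ := by
  refine HasSolidNorm.solid ?_
  rw [abs_of_nonneg (posPart_nonneg y), posPart_def]
  exact sup_le (le_abs_self y) (abs_nonneg y)

lemma norm_negPart_le' (y : Y) : ‖y⁻‖ ≤ ‖y‖ := by
  refine HasSolidNorm.solid ?_
  rw [abs_of_nonneg (negPart_nonneg y), negPart_def]
  exact sup_le (neg_le_abs y) (abs_nonneg y)

lemma rkExt_bound (g : StrongDual ℝ Y) (y : Y) : ‖rkExt g y‖ ≤ (2 * ‖g‖) * ‖y‖ := by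
  have h1 : 0 ≤ rkFun g y⁺ := rkFun_nonneg g (posPart_nonneg y)
  have h2 : 0 ≤ rkFun g y⁻ := rkFun_nonneg g (negPart_nonneg y)
  have h3 : rkFun g y⁺ ≤ ‖g‖ * ‖y‖ :=
    (rkFun_le g (posPart_nonneg y)).trans
      (mul_le_mul_of_nonneg_left (norm_posPart_le' y) (norm_nonneg g))
  have h4 : rkFun g y⁻ ≤ ‖g‖ * ‖y‖ :=
    (rkFun_le g (negPart_nonneg y)).trans
      (mul_le_mul_of_nonneg_left (norm_negPart_le' y) (norm_nonneg g))
  rw [Real.norm_eq_abs]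
  unfold rkExt
  rw [abs_sub_le_iff]
  constructor <;> nlinarith

/-- The Riesz–Kantorovich extension as a continuous linear functional. -/
noncomputable def rkDual (g : StrongDual ℝ Y) : StrongDual ℝ Y :=
  AddMonoidHom.toRealLinearMap (AddMonoidHom.mk' (rkExt g) (rkExt_add g))
    ((AddMonoidHomClass.lipschitz_of_bound (AddMonoidHom.mk' (rkExt g) (rkExt_add g))
      (2 * ‖g‖) (rkExt_bound g)).continuous)

lemma rkDual_apply (g : StrongDual ℝ Y) (y : Y) : rkDual g y = rkFun g y⁺ - rkFun g y⁻ := rfl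

lemma rkDual_apply_nonneg (g : StrongDual ℝ Y) {η : Y} (hη : 0 ≤ η) : rkDual g η = rkFun g η := by
  rw [rkDual_apply, posPart_eq_self.mpr hη, negPart_eq_zero.mpr hη, rkFun_zero, sub_zero]

end Aux

section Main

variable {Y : Type*} [NormedAddCommGroup Y] [Lattice Y] [HasSolidNorm Y]
    [IsOrderedAddMonoid Y] [NormedSpace ℝ Y]
variable [Lattice (StrongDual ℝ Y)] [CovariantClass (StrongDual ℝ Y) (StrongDual ℝ Y) (· + ·) (· ≤ ·)]

lemma dual_sub_nonneg {a b : StrongDual ℝ Y} : 0 ≤ b - a ↔ a ≤ b := by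
  constructor
  · intro h
    have := add_le_add_left h a
    simpa using this
  · intro h
    have := add_le_add_left h (-a)
    simpa [neg_add_eq_sub] using this

lemma abs_apply_le_rkFun (hord : ∀ f : StrongDual ℝ Y, 0 ≤ f ↔ ∀ η : Y, 0 ≤ η → 0 ≤ f η)
    (g : StrongDual ℝ Y) {ξ : Y} (hξ : 0 ≤ ξ) :
    |g| ξ ≤ rkFun g ξ := by
  have hg_le : g ≤ rkDual g := by
    rw [← dual_sub_nonneg, hord]
    intro η hη
    have h1 : g η ≤ rkFun g η := le_rkFun g hη ⟨(neg_nonpos_of_nonneg hη).trans hη, le_refl η⟩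
    rw [ContinuousLinearMap.sub_apply, rkDual_apply_nonneg g hη]
    linarith
  have hng_le : -g ≤ rkDual g := by
    rw [← dual_sub_nonneg, hord]
    intro η hη
    have hmem : -η ∈ Set.Icc (-η) η := ⟨le_refl _, neg_nonpos_of_nonneg hη |>.trans hη⟩
    have h1 : g (-η) ≤ rkFun g η := le_rkFun g hη hmem
    rw [ContinuousLinearMap.sub_apply, rkDual_apply_nonneg g hη, ContinuousLinearMap.neg_apply]
    have : g (-η) = -g η := map_neg g η
    linarith
  have habs : |g| ≤ rkDual g := abs_le'.2 ⟨hg_le, hng_le⟩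
  have h0 : 0 ≤ rkDual g - |g| := dual_sub_nonneg.mpr habs
  have := (hord _).mp h0 ξ hξ
  rw [ContinuousLinearMap.sub_apply] at this
  have hval : rkDual g ξ = rkFun g ξ := rkDual_apply_nonneg g hξ
  linarith

end Main

/-- If `K` is AM-compact on a Banach lattice `Y` and `ξ ≥ 0`, then the adjoint `K*`
is continuous from the closed unit ball of `X = Y*` with the weak* topology to `X`
with the seminorm `ρ_ξ(x) = |x|(ξ)`. Here `X = Y*` carries its (dual) lattice order,
described by `hord`. -/
theorem adjoint_AMCompact_weakStar_to_seminorm_continuous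
    {Y : Type*} [NormedAddCommGroup Y] [Lattice Y] [HasSolidNorm Y]
    [IsOrderedAddMonoid Y] [NormedSpace ℝ Y] [CompleteSpace Y]
    [Lattice (StrongDual ℝ Y)]
    [CovariantClass (StrongDual ℝ Y) (StrongDual ℝ Y) (· + ·) (· ≤ ·)]
    (hord : ∀ f : StrongDual ℝ Y, 0 ≤ f ↔ ∀ η : Y, 0 ≤ η → 0 ≤ f η)
    (K : Y →L[ℝ] Y) (hK : IsAMCompact K) (ξ : Y) (hξ : 0 ≤ ξ) :
    ∀ x₀ : StrongDual ℝ Y, ‖x₀‖ ≤ 1 → ∀ ε : ℝ, 0 < ε →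
      ∃ U ∈ nhds (StrongDual.toWeakDual x₀),
        ∀ x : StrongDual ℝ Y, ‖x‖ ≤ 1 → StrongDual.toWeakDual x ∈ U →
          |adjointOp K x - adjointOp K x₀| ξ < ε := by
  intro x₀ hx₀ ε hε
  obtain ⟨t, hts, htfin, htcover⟩ := (hK ξ hξ).finite_cover_balls (show (0:ℝ) < ε/8 by linarith)
  refine ⟨⋂ y ∈ t, {w : WeakDual ℝ Y | |w y - x₀ y| < ε/4}, ?_, ?_⟩
  · refine IsOpen.mem_nhds ?_ ?_
    · refine htfin.isOpen_biInter fun y _ => ?_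
      have hcont : Continuous fun w : WeakDual ℝ Y => |w y - x₀ y| :=
        ((WeakDual.eval_continuous y).sub continuous_const).abs
      exact isOpen_lt hcont continuous_const
    · refine Set.mem_iInter₂.mpr fun y _ => ?_
      have hzero : (StrongDual.toWeakDual x₀ : WeakDual ℝ Y) y - x₀ y = 0 := sub_self _
      show |(StrongDual.toWeakDual x₀ : WeakDual ℝ Y) y - x₀ y| < ε/4
      rw [hzero, abs_zero]
      linarith
  · intro x hx hxU
    set g : StrongDual ℝ Y := adjointOp K x - adjointOp K x₀ with hgdef
    have hgapp : ∀ η : Y, g η = (x - x₀) (K η) := by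
      intro η
      simp [hgdef, adjointOp, ContinuousLinearMap.sub_apply]
    have hbound : ∀ z ∈ g '' Set.Icc (-ξ) ξ, z ≤ ε/2 := by
      rintro _ ⟨η, hη, rfl⟩
      have hKη : K η ∈ closure (K '' Set.Icc (-ξ) ξ) :=
        subset_closure (Set.mem_image_of_mem K hη)
      obtain ⟨y, hy⟩ := Set.mem_iUnion₂.mp (htcover hKη)
      obtain ⟨hyt, hyball⟩ := hy
      have hdist : ‖K η - y‖ < ε/8 := by
        rw [← dist_eq_norm]
        exact Metric.mem_ball.mp hyball
      have hnet : |x y - x₀ y| < ε/4 := by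
        have := Set.mem_iInter₂.mp hxU y hyt
        exact this
      have hxsub : ‖x - x₀‖ ≤ 2 := by
        calc ‖x - x₀‖ ≤ ‖x‖ + ‖x₀‖ := norm_sub_le x x₀
          _ ≤ 2 := by linarith
      have hsplit : (x - x₀) (K η) = (x - x₀) (K η - y) + (x y - x₀ y) := by
        rw [map_sub (x - x₀) (K η) y]
        simp [ContinuousLinearMap.sub_apply]
      have h1 : |(x - x₀) (K η - y)| ≤ 2 * (ε/8) := by
        rw [← Real.norm_eq_abs]
        calc ‖(x - x₀) (K η - y)‖ ≤ ‖x - x₀‖ * ‖K η - y‖ := (x - x₀).le_opNorm _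
          _ ≤ 2 * (ε/8) := by
              apply mul_le_mul hxsub hdist.le (norm_nonneg _) (by norm_num)
      have h2 := (abs_le.mp h1).2
      have h3 := (abs_lt.mp hnet).2
      rw [hgapp, hsplit]
      linarith
    have hsup : rkFun g ξ ≤ ε/2 := csSup_le (rk_nonempty g hξ) hbound
    have habs : |g| ξ ≤ rkFun g ξ := abs_apply_le_rkFun hord g hξ
    calc |g| ξ ≤ ε/2 := le_trans habs hsup
      _ < ε := by linarith
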